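/- Let A = [[0,0,1,0,0],[0,0,0,1,0],[0,0,0,0,−t],[0,0,0,0,s],[0,0,0,0,0]] (the case c = 0, b = 1 of the family) with s,t > 0, s²+t² = 1. Then A³ = 0, and the span of ξ = [t, −s, 0, 0, −1]ᵀ, Aξ, A²ξ is a nontrivial subspace invariant under both A and A*, so A is unitarily reducible. -/
import Mathlib


open Matrix

set_option maxHeartbeats 1000000 in
theorem reducing_subspace_case_b_one_c_zero (s t : ℝ) (hs : 0 < s) (ht : 0 < t)
    (hst : s ^ 2 + t ^ 2 = 1) :
    let A : Matrix (Fin 5) (Fin 5) ℂ :=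
      !![0, 0, 1, 0, 0;
         0, 0, 0, 1, 0;
         0, 0, 0, 0, ((-t : ℝ) : ℂ);
         0, 0, 0, 0, (s : ℂ);
         0, 0, 0, 0, 0]
    let ξ : Fin 5 → ℂ := ![(t : ℂ), ((-s : ℝ) : ℂ), 0, 0, -1]
    let L : Submodule ℂ (Fin 5 → ℂ) :=
      Submodule.span ℂ {ξ, A.mulVec ξ, A.mulVec (A.mulVec ξ)}
    A ^ 3 = 0 ∧ L ≠ ⊥ ∧ L ≠ ⊤ ∧
      (∀ v ∈ L, A.mulVec v ∈ L) ∧ (∀ v ∈ L, Aᴴ.mulVec v ∈ L) := by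
  intro A ξ L
  have hstC : (s : ℂ) ^ 2 + (t : ℂ) ^ 2 = 1 := by exact_mod_cast hst
  have h1 : A.mulVec ξ = ![0, 0, (t : ℂ), -(s : ℂ), 0] := by
    funext i
    fin_cases i <;>
      simp [A, ξ, Matrix.mulVec, dotProduct, Fin.sum_univ_five,
        Matrix.vecHead, Matrix.vecTail] <;> ring
  have e1 : A.mulVec ![0, 0, (t : ℂ), -(s : ℂ), 0] = ![(t : ℂ), -(s : ℂ), 0, 0, 0] := by
    funext i
    fin_cases i <;>
      simp [A, Matrix.mulVec, dotProduct, Fin.sum_univ_five,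
        Matrix.vecHead, Matrix.vecTail]
  have e2 : A.mulVec ![(t : ℂ), -(s : ℂ), 0, 0, 0] = 0 := by
    funext i
    fin_cases i <;>
      simp [A, Matrix.mulVec, dotProduct, Fin.sum_univ_five,
        Matrix.vecHead, Matrix.vecTail]
  have h2 : A.mulVec (A.mulVec ξ) = ![(t : ℂ), -(s : ℂ), 0, 0, 0] := by
    rw [h1, e1]
  have h3 : A.mulVec (A.mulVec (A.mulVec ξ)) = 0 := by rw [h1, e1, e2]
  have h4 : Aᴴ.mulVec ξ = A.mulVec ξ := by
    rw [h1]
    funext i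
    fin_cases i <;>
      simp [A, ξ, Matrix.mulVec, dotProduct, Fin.sum_univ_five,
        Matrix.conjTranspose_apply, Matrix.vecHead, Matrix.vecTail] <;> ring
  have h5 : Aᴴ.mulVec (A.mulVec ξ) = ξ - A.mulVec (A.mulVec ξ) := by
    rw [h1, e1]
    funext i
    fin_cases i <;>
      simp [A, ξ, Matrix.mulVec, dotProduct, Fin.sum_univ_five,
        Matrix.conjTranspose_apply, Matrix.vecHead, Matrix.vecTail] <;>
      · rw [show ((-1 : ℂ)) = -((s:ℂ)^2 + (t:ℂ)^2) by rw [hstC]]; ring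
  have h6 : Aᴴ.mulVec (A.mulVec (A.mulVec ξ)) = A.mulVec ξ := by
    rw [h1, e1]
    funext i
    fin_cases i <;>
      simp [A, Matrix.mulVec, dotProduct, Fin.sum_univ_five,
        Matrix.conjTranspose_apply, Matrix.vecHead, Matrix.vecTail]
  have hmemξ : ξ ∈ L := Submodule.subset_span (by left; rfl)
  have hmem1 : A.mulVec ξ ∈ L := Submodule.subset_span (by right; left; rfl)
  have hmem2 : A.mulVec (A.mulVec ξ) ∈ L :=
    Submodule.subset_span (by right; right; rfl)
  refine ⟨?_, ?_, ?_, ?_, ?_⟩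
  · -- A ^ 3 = 0
    have hA2 : A * A = !![0, 0, 0, 0, ((-t : ℝ) : ℂ);
                         0, 0, 0, 0, (s : ℂ);
                         0, 0, 0, 0, 0;
                         0, 0, 0, 0, 0;
                         0, 0, 0, 0, 0] := by
      ext i j
      fin_cases i <;> fin_cases j <;>
        simp [A, Matrix.mul_apply, Fin.sum_univ_five, Matrix.vecHead, Matrix.vecTail]
    have hA3 : (A * A) * A = 0 := by
      rw [hA2]
      ext i j
      fin_cases i <;> fin_cases j <;>
        simp [A, Matrix.mul_apply, Fin.sum_univ_five, Matrix.vecHead, Matrix.vecTail]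
    rw [pow_succ, pow_succ, pow_one, hA3]
  · -- L ≠ ⊥
    intro hbot
    have hξ0 : ξ = 0 := by
      have := hbot ▸ hmemξ
      simpa using this
    have : ξ 4 = 0 := by rw [hξ0]; rfl
    simp [ξ] at this
  · -- L ≠ ⊤
    intro htop
    have key : ∀ v ∈ L, (s : ℂ) * v 0 + (t : ℂ) * v 1 = 0 := by
      intro v hv
      induction hv using Submodule.span_induction with
      | mem x hx =>
        simp only [Set.mem_insert_iff, Set.mem_singleton_iff] at hx
        rcases hx with rfl | rfl | rfl
        · simp [ξ]; push_cast; ring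
        · rw [h1]; simp
        · rw [h2]; simp; ring
      | zero => simp
      | add x y _ _ hx hy =>
        simp only [Pi.add_apply]; linear_combination hx + hy
      | smul a x _ hx =>
        simp only [Pi.smul_apply, smul_eq_mul]; linear_combination a * hx
    have he : (Pi.single 0 1 : Fin 5 → ℂ) ∈ L := htop ▸ Submodule.mem_top
    have := key _ he
    simp [Pi.single_apply] at this
    exact hs.ne' (by exact_mod_cast this)
  · -- A-invariance
    intro v hv
    induction hv using Submodule.span_induction with
    | mem x hx =>
      simp only [Set.mem_insert_iff, Set.mem_singleton_iff] at hx
      rcases hx with rfl | rfl | rfl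
      · exact hmem1
      · exact hmem2
      · rw [h3]; exact L.zero_mem
    | zero => rw [Matrix.mulVec_zero]; exact L.zero_mem
    | add x y _ _ hx hy => rw [Matrix.mulVec_add]; exact L.add_mem hx hy
    | smul a x _ hx => rw [Matrix.mulVec_smul]; exact L.smul_mem a hx
  · -- Aᴴ-invariance
    intro v hv
    induction hv using Submodule.span_induction with
    | mem x hx =>
      simp only [Set.mem_insert_iff, Set.mem_singleton_iff] at hx
      rcases hx with rfl | rfl | rfl
      · rw [h4]; exact hmem1
      · rw [h5]; exact L.sub_mem hmemξ hmem2
      · rw [h6]; exact hmem1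
    | zero => rw [Matrix.mulVec_zero]; exact L.zero_mem
    | add x y _ _ hx hy => rw [Matrix.mulVec_add]; exact L.add_mem hx hy
    | smul a x _ hx => rw [Matrix.mulVec_smul]; exact L.smul_mem a hx
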